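/- Let X be a topological space, σ_1, …, σ_n : X → X continuous maps, f : X → ℂ a function, and fix 1 ≤ i ≤ n and points x, y ∈ X with σ_i(y) = x. Let H = ℓ²(𝔽_n^+) with standard orthonormal basis (e_w) indexed by words w ∈ 𝔽_n^+. Then there is a linear isometry W : H → H with W e_w = e_{w·i} for all words w (appending the letter i on the right), and W satisfies: (1) for any bounded operators A, B ∈ B(H) with A e_w = f(σ_w(x)) e_w and B e_w = f(σ_w(y)) e_w for all words w, one has W A = B W; and (2) for any bounded operators L, L' ∈ B(H) with L e_w = e_{j·w} and L' e_w = e_{j·w} for all words w (prepending a fixed letter j on the left), one has W L = L' W. -/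

import Mathlib

/-- For a word `w = i₁⋯i_k` over `{1,…,n}`, the composition `σ_w = σ_{i₁} ∘ ⋯ ∘ σ_{i_k}`,
with `σ_∅ = id`. -/
abbrev sigmaWord {X : Type*} {n : ℕ} (σ : Fin n → X → X) (w : List (Fin n)) : X → X :=
  w.foldr (fun i g => σ i ∘ g) id

/-- The Fock space `ℓ²(𝔽ₙ⁺)` over the free monoid on `n` generators. -/
abbrev FockSpace (n : ℕ) : Type _ := lp (fun _ : FreeMonoid (Fin n) => ℂ) 2

/-- The standard orthonormal basis vector `e_w` of `ℓ²(𝔽ₙ⁺)`. -/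
noncomputable abbrev fockBasis {n : ℕ} (w : FreeMonoid (Fin n)) : FockSpace n :=
  haveI : DecidableEq (FreeMonoid (Fin n)) := Classical.decEq _
  lp.single 2 w 1

lemma sigmaWord_append {X : Type*} {n : ℕ} (σ : Fin n → X → X) (l : List (Fin n)) (i : Fin n)
    (y : X) : sigmaWord σ (l ++ [i]) y = sigmaWord σ l (σ i y) := by
  induction l with
  | nil => rfl
  | cons a l ih => simp [sigmaWord, List.foldr_append] at ih ⊢; rw [ih]

/-- If `x = σᵢ(y)`, the orbit representation at `x` is the restriction of the orbit
representation at `y` to an invariant subspace: the right-creation isometry `W` by the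
letter `i` intertwines the diagonal operators and the left-creation operators. -/
theorem orbit_representation_restriction {X : Type*} [TopologicalSpace X] {n : ℕ}
    (σ : Fin n → X → X) (hσ : ∀ i, Continuous (σ i)) (f : X → ℂ) (i : Fin n)
    (x y : X) (hxy : σ i y = x) :
    ∃ W : FockSpace n →ₗᵢ[ℂ] FockSpace n,
      (∀ w : FreeMonoid (Fin n), W (fockBasis w) = fockBasis (w * FreeMonoid.of i)) ∧
      (∀ A B : FockSpace n →L[ℂ] FockSpace n,
        (∀ w : FreeMonoid (Fin n),
          A (fockBasis w) = f (sigmaWord σ (FreeMonoid.toList w) x) • fockBasis w) →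
        (∀ w : FreeMonoid (Fin n),
          B (fockBasis w) = f (sigmaWord σ (FreeMonoid.toList w) y) • fockBasis w) →
        ∀ ξ, W (A ξ) = B (W ξ)) ∧
      (∀ (j : Fin n) (L L' : FockSpace n →L[ℂ] FockSpace n),
        (∀ w : FreeMonoid (Fin n), L (fockBasis w) = fockBasis (FreeMonoid.of j * w)) →
        (∀ w : FreeMonoid (Fin n), L' (fockBasis w) = fockBasis (FreeMonoid.of j * w)) →
        ∀ ξ, W (L ξ) = L' (W ξ)) := by
  classical
  -- the standard Hilbert basis of Fock space
  let b : HilbertBasis (FreeMonoid (Fin n)) ℂ (FockSpace n) :=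
    HilbertBasis.ofRepr (LinearIsometryEquiv.refl ℂ _)
  have hb : ∀ w, b w = fockBasis w := by
    intro w
    show b.repr.symm (lp.single 2 w 1) = _
    rw [b.repr_symm_single]
    unfold fockBasis
    congr 1
  -- the orthonormal family `e_{w·i}`
  have hON : Orthonormal ℂ (fun w : FreeMonoid (Fin n) => fockBasis (w * FreeMonoid.of i)) := by
    have h1 : Orthonormal ℂ (fun w : FreeMonoid (Fin n) => fockBasis w) := by
      have := b.orthonormal
      simpa [funext hb] using this
    have hinj : Function.Injective (fun w : FreeMonoid (Fin n) => w * FreeMonoid.of i) :=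
      fun u v h => mul_right_cancel h
    exact h1.comp _ hinj
  let W : FockSpace n →ₗᵢ[ℂ] FockSpace n := hON.orthogonalFamily.linearIsometry
  have hW : ∀ w : FreeMonoid (Fin n), W (fockBasis w) = fockBasis (w * FreeMonoid.of i) := by
    intro w
    have : W (lp.single 2 w (1 : ℂ)) =
        (1 : ℂ) • fockBasis (w * FreeMonoid.of i) :=
      hON.orthogonalFamily.linearIsometry_apply_single (1 : ℂ)
    simpa using this
  -- density: two continuous linear maps agreeing on the basis are equal
  have hdense : Dense ((Submodule.span ℂ (Set.range (fockBasis (n := n)))) :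
      Set (FockSpace n)) := by
    rw [Submodule.dense_iff_topologicalClosure_eq_top]
    have := b.dense_span
    rwa [funext hb] at this
  have key : ∀ T S : FockSpace n →L[ℂ] FockSpace n,
      (∀ w, T (fockBasis w) = S (fockBasis w)) → ∀ ξ, T ξ = S ξ := by
    intro T S h ξ
    have : T = S := ContinuousLinearMap.ext_on hdense (by rintro _ ⟨w, rfl⟩; exact h w)
    rw [this]
  refine ⟨W, hW, ?_, ?_⟩
  · intro A B hA hB ξ
    have := key (W.toContinuousLinearMap.comp A) (B.comp W.toContinuousLinearMap) ?_ ξ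
    · simpa using this
    · intro w
      simp only [ContinuousLinearMap.comp_apply, LinearIsometry.coe_toContinuousLinearMap,
        hA w, map_smul, hW, hB]
      congr 2
      have : FreeMonoid.toList (w * FreeMonoid.of i) = FreeMonoid.toList w ++ [i] := rfl
      rw [this, sigmaWord_append, hxy]
  · intro j L L' hL hL' ξ
    have := key (W.toContinuousLinearMap.comp L) (L'.comp W.toContinuousLinearMap) ?_ ξ
    · simpa using this
    · intro w
      simp only [ContinuousLinearMap.comp_apply, LinearIsometry.coe_toContinuousLinearMap,
        hL w, hW, hL']
      rw [mul_assoc]
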